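/- Let f be a cw-expansive homeomorphism of a compact metric space with cw-expansivity constant ε, and let ρ(C) = λ^{N(C)} with λ ∈ (0,1) as in the hyperbolic cw-metric construction. Then ρ is compatible with diameter: (a) for each δ > 0 there is γ > 0 such that diam(C) < γ implies ρ(C) < δ; (b) for each δ > 0 there is γ > 0 such that ρ(C) < γ implies diam(C) < δ. -/

import Mathlib

open Metric Set

variable {X : Type*} [MetricSpace X]

/-- Two-sided iteration of a homeomorphism. -/
def zIter (f : X ≃ₜ X) (n : ℤ) (x : X) : X :=
  if 0 ≤ n then (⇑f)^[n.toNat] x else (⇑f.symm)^[(-n).toNat] x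

/-- A subcontinuum: a compact connected (nonempty) subset. -/
def IsContinuum (A : Set X) : Prop := IsCompact A ∧ IsConnected A

/-- Local stable set. -/
def Ws (f : X ≃ₜ X) (ε : ℝ) (x : X) : Set X :=
  {y | ∀ n : ℕ, dist ((⇑f)^[n] x) ((⇑f)^[n] y) ≤ ε}

/-- Local unstable set. -/
def Wu (f : X ≃ₜ X) (ε : ℝ) (x : X) : Set X :=
  {y | ∀ n : ℕ, dist ((⇑f.symm)^[n] x) ((⇑f.symm)^[n] y) ≤ ε}

/-- Local stable continuum: connected component of the local stable set. -/
def Cs (f : X ≃ₜ X) (ε : ℝ) (x : X) : Set X := connectedComponentIn (Ws f ε x) x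

/-- Local unstable continuum. -/
def Cu (f : X ≃ₜ X) (ε : ℝ) (x : X) : Set X := connectedComponentIn (Wu f ε x) x

/-- cw-expansivity with a given constant. -/
def CwExpansiveWith (f : X ≃ₜ X) (c : ℝ) : Prop :=
  0 < c ∧ ∀ C : Set X, IsContinuum C →
    (∀ n : ℤ, Metric.diam (zIter f n '' C) ≤ c) → C.Subsingleton

/-- Continuum-wise expansivity. -/
def CwExpansive (f : X ≃ₜ X) : Prop := ∃ c, CwExpansiveWith f c

/-- cw-local-product-structure. -/
def CwLPS (f : X ≃ₜ X) : Prop :=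
  ∀ ε > 0, ∃ δ > 0, ∀ x y : X, dist x y < δ → (Cu f ε x ∩ Cs f ε y).Nonempty

/-- Continuum-wise hyperbolicity. -/
def CwHyperbolic (f : X ≃ₜ X) : Prop := CwExpansive f ∧ CwLPS f

/-- cwN-expansivity. -/
def CwNExpansive (f : X ≃ₜ X) (N : ℕ) : Prop :=
  ∃ c > 0, ∀ x : X,
    (Cs f c x ∩ Cu f c x).Finite ∧ (Cs f c x ∩ Cu f c x).ncard ≤ N

/-- cwN-hyperbolicity. -/
def CwNHyperbolic (f : X ≃ₜ X) (N : ℕ) : Prop := CwHyperbolic f ∧ CwNExpansive f N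

lemma zIter_continuous (f : X ≃ₜ X) (n : ℤ) : Continuous (zIter f n) := by
  unfold zIter
  split_ifs
  · exact f.continuous.iterate _
  · exact f.symm.continuous.iterate _

lemma stmt13_small_image [CompactSpace X] {g : X → X} (hg : Continuous g) {ε : ℝ} (hε : 0 < ε) :
    ∃ γ > (0:ℝ), ∀ C : Set X, Metric.diam C < γ → Metric.diam (g '' C) ≤ ε := by
  have hu : UniformContinuous g := CompactSpace.uniformContinuous_of_continuous hg
  rw [Metric.uniformContinuous_iff] at hu
  obtain ⟨γ, hγ, h⟩ := hu ε hε
  refine ⟨γ, hγ, fun C hC => ?_⟩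
  apply Metric.diam_le_of_forall_dist_le hε.le
  rintro _ ⟨x, hx, rfl⟩ _ ⟨y, hy, rfl⟩
  have hb : dist x y ≤ Metric.diam C :=
    Metric.dist_le_diam_of_mem ((isCompact_univ.isBounded).subset (subset_univ C)) hx hy
  exact (h (lt_of_le_of_lt hb hC)).le

lemma stmt13_small_all [CompactSpace X] (f : X ≃ₜ X) {ε : ℝ} (hε : 0 < ε) (m : ℕ) :
    ∃ γ > (0:ℝ), ∀ C : Set X, Metric.diam C < γ →
      ∀ i : ℤ, i.natAbs < m → Metric.diam (zIter f i '' C) ≤ ε := by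
  induction m with
  | zero => exact ⟨1, one_pos, fun C _ i hi => by omega⟩
  | succ m ih =>
    obtain ⟨γ₁, hγ₁, h₁⟩ := ih
    obtain ⟨γ₂, hγ₂, h₂⟩ := stmt13_small_image (zIter_continuous f m) hε
    obtain ⟨γ₃, hγ₃, h₃⟩ := stmt13_small_image (zIter_continuous f (-(m:ℤ))) hε
    refine ⟨min γ₁ (min γ₂ γ₃), by positivity, fun C hC i hi => ?_⟩
    rcases lt_or_eq_of_le (Nat.lt_succ_iff.mp hi) with h | h
    · exact h₁ C (hC.trans_le (min_le_left _ _)) i h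
    · rcases Int.natAbs_eq_iff.mp h with rfl | rfl
      · exact h₂ C (hC.trans_le ((min_le_right _ _).trans (min_le_left _ _)))
      · exact h₃ C (hC.trans_le ((min_le_right _ _).trans (min_le_right _ _)))

lemma stmt13_kato [CompactSpace X] (f : X ≃ₜ X) {ε : ℝ} (hf : CwExpansiveWith f ε)
    {δ : ℝ} (hδ : 0 < δ) :
    ∃ n : ℕ, ∀ C : Set X, IsContinuum C →
      (∀ i : ℤ, i.natAbs ≤ n → Metric.diam (zIter f i '' C) ≤ ε) → Metric.diam C < δ := by
  by_contra hcon
  push_neg at hcon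
  choose C hCc hCi hCd using hcon
  let K : ℕ → TopologicalSpace.NonemptyCompacts X := fun n => ⟨⟨C n, (hCc n).1⟩, (hCc n).2.1⟩
  obtain ⟨L, -, φ, hφ, hconv⟩ := isCompact_univ.tendsto_subseq (x := K) (fun n => mem_univ _)
  set S : Set X := (L : Set X) with hS
  have hKn : ∀ n, (K n : Set X) = C n := fun n => rfl
  have hfin : ∀ n, EMetric.hausdorffEdist (C n) S ≠ ⊤ := fun n =>
    Metric.hausdorffEdist_ne_top_of_nonempty_of_bounded (hCc n).2.1 L.nonempty
      ((hCc n).1.isBounded) L.isCompact.isBounded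
  have hfin' : ∀ n, EMetric.hausdorffEdist S (C n) ≠ ⊤ := fun n => by
    exact fun h => hfin n (by rw [← h]; exact EMetric.hausdorffEdist_comm)
  -- find a far index with small Hausdorff distance
  have hget : ∀ η > (0:ℝ), ∀ m : ℕ, ∃ k : ℕ, m ≤ φ k ∧
      Metric.hausdorffDist (C (φ k)) S < η ∧ Metric.hausdorffDist S (C (φ k)) < η := by
    intro η hη m
    rw [Metric.tendsto_atTop] at hconv
    obtain ⟨k0, hk0⟩ := hconv η hη
    refine ⟨max k0 m, le_trans (le_max_right _ _) (hφ.le_apply), ?_, ?_⟩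
    · have := hk0 (max k0 m) (le_max_left _ _)
      rwa [Function.comp_apply, Metric.NonemptyCompacts.dist_eq] at this
    · have := hk0 (max k0 m) (le_max_left _ _)
      rw [Function.comp_apply, Metric.NonemptyCompacts.dist_eq] at this
      rwa [Metric.hausdorffDist_comm] at this
  -- S is not a subsingleton
  have hnotss : ¬ S.Subsingleton := by
    obtain ⟨k, -, hk1, -⟩ := hget (δ/8) (by positivity) 0
    have hfar : ∃ x ∈ C (φ k), ∃ y ∈ C (φ k), δ/2 < dist x y := by
      by_contra h
      push_neg at h
      have : Metric.diam (C (φ k)) ≤ δ/2 := Metric.diam_le_of_forall_dist_le (by positivity) h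
      linarith [hCd (φ k)]
    obtain ⟨x, hx, y, hy, hxy⟩ := hfar
    obtain ⟨x', hx', hxx'⟩ := Metric.exists_dist_lt_of_hausdorffDist_lt hx hk1 (hfin _)
    obtain ⟨y', hy', hyy'⟩ := Metric.exists_dist_lt_of_hausdorffDist_lt hy hk1 (hfin _)
    intro hss
    have heq : x' = y' := hss hx' hy'
    have h1 : dist x y ≤ dist x x' + dist x' y' + dist y' y := dist_triangle4 x x' y' y
    have h2 : dist x' y' = 0 := by rw [heq, dist_self]
    have h3 : dist y' y = dist y y' := dist_comm _ _
    linarith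
  -- all iterates of S have diameter ≤ ε
  have hiter : ∀ i : ℤ, Metric.diam (zIter f i '' S) ≤ ε := by
    intro i
    apply Metric.diam_le_of_forall_dist_le hf.1.le
    rintro _ ⟨x, hx, rfl⟩ _ ⟨y, hy, rfl⟩
    refine le_of_forall_pos_le_add fun η hη => ?_
    have hu : UniformContinuous (zIter f i) :=
      CompactSpace.uniformContinuous_of_continuous (zIter_continuous f i)
    rw [Metric.uniformContinuous_iff] at hu
    obtain ⟨θ, hθ, hθ'⟩ := hu (η/2) (by positivity)
    obtain ⟨k, hk0, -, hk2⟩ := hget θ hθ i.natAbs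
    obtain ⟨x', hx', hxx'⟩ := Metric.exists_dist_lt_of_hausdorffDist_lt hx hk2 (hfin' _)
    obtain ⟨y', hy', hyy'⟩ := Metric.exists_dist_lt_of_hausdorffDist_lt hy hk2 (hfin' _)
    have hmid : dist (zIter f i x') (zIter f i y') ≤ ε := by
      refine le_trans (Metric.dist_le_diam_of_mem ?_ (mem_image_of_mem _ hx') (mem_image_of_mem _ hy')) (hCi (φ k) i hk0)
      exact (isCompact_univ.isBounded).subset (subset_univ _)
    have h1 : dist (zIter f i x) (zIter f i x') < η/2 := hθ' hxx'
    have h2 : dist (zIter f i y') (zIter f i y) < η/2 := hθ' (by rwa [dist_comm])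
    calc dist (zIter f i x) (zIter f i y)
        ≤ dist (zIter f i x) (zIter f i x') + dist (zIter f i x') (zIter f i y')
          + dist (zIter f i y') (zIter f i y) := dist_triangle4 _ _ _ _
      _ ≤ ε + η := by linarith
  -- S is preconnected
  have hpre : IsPreconnected S := by
    by_contra hnc
    rw [IsPreconnected] at hnc
    push_neg at hnc
    obtain ⟨u, v, hu, hv, hsuv, hsu, hsv, hsuvne⟩ := hnc
    set A : Set X := S \ v with hA
    set B : Set X := S \ u with hB
    have hAc : IsCompact A := L.isCompact.diff hv
    have hBc : IsCompact B := L.isCompact.diff hu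
    have hAne : A.Nonempty := by
      obtain ⟨a, haS, hau⟩ := hsu
      refine ⟨a, haS, fun hav => ?_⟩
      have : a ∈ S ∩ (u ∩ v) := ⟨haS, hau, hav⟩
      rw [hsuvne] at this; exact this
    have hBne : B.Nonempty := by
      obtain ⟨b, hbS, hbv⟩ := hsv
      refine ⟨b, hbS, fun hbu => ?_⟩
      have : b ∈ S ∩ (u ∩ v) := ⟨hbS, hbu, hbv⟩
      rw [hsuvne] at this; exact this
    have hABdisj : Disjoint A B := by
      rw [Set.disjoint_left]
      rintro x ⟨hxS, hxv⟩ ⟨-, hxu⟩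
      rcases hsuv hxS with h | h
      exacts [hxu h, hxv h]
    have hSAB : S ⊆ A ∪ B := by
      intro x hxS
      rcases hsuv hxS with h | h
      · left
        refine ⟨hxS, fun hxv => ?_⟩
        have : x ∈ S ∩ (u ∩ v) := ⟨hxS, h, hxv⟩
        rw [hsuvne] at this; exact this
      · right
        refine ⟨hxS, fun hxu => ?_⟩
        have : x ∈ S ∩ (u ∩ v) := ⟨hxS, hxu, h⟩
        rw [hsuvne] at this; exact this
    obtain ⟨θ, hθ, hdisj⟩ := hABdisj.exists_thickenings hAc hBc.isClosed
    obtain ⟨k, -, hk1, hk2⟩ := hget θ hθ 0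
    have hcover : C (φ k) ⊆ Metric.thickening θ A ∪ Metric.thickening θ B := by
      intro x hx
      obtain ⟨y, hy, hxy⟩ := Metric.exists_dist_lt_of_hausdorffDist_lt hx hk1 (hfin _)
      rcases hSAB hy with h | h
      · exact Or.inl (Metric.mem_thickening_iff.mpr ⟨y, h, hxy⟩)
      · exact Or.inr (Metric.mem_thickening_iff.mpr ⟨y, h, hxy⟩)
    have hCU : (C (φ k) ∩ Metric.thickening θ A).Nonempty := by
      obtain ⟨a, ha⟩ := hAne
      obtain ⟨c, hc, hac⟩ := Metric.exists_dist_lt_of_hausdorffDist_lt ha.1 hk2 (hfin' _)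
      exact ⟨c, hc, Metric.mem_thickening_iff.mpr ⟨a, ha, by rwa [dist_comm]⟩⟩
    have hCV : (C (φ k) ∩ Metric.thickening θ B).Nonempty := by
      obtain ⟨b, hb⟩ := hBne
      obtain ⟨c, hc, hbc⟩ := Metric.exists_dist_lt_of_hausdorffDist_lt hb.1 hk2 (hfin' _)
      exact ⟨c, hc, Metric.mem_thickening_iff.mpr ⟨b, hb, by rwa [dist_comm]⟩⟩
    obtain ⟨x, -, hxA, hxB⟩ := (hCc (φ k)).2.2 _ _ Metric.isOpen_thickening
      Metric.isOpen_thickening hcover hCU hCV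
    exact Set.disjoint_left.mp hdisj hxA hxB
  exact hnotss (hf.2 S ⟨L.isCompact, L.nonempty, hpre⟩ hiter)

/-- Compatibility between ρ = λ^{N(·)} and the diameter. -/
theorem stmt13 {X : Type*} [MetricSpace X] [CompactSpace X]
    (f : X ≃ₜ X) (ε : ℝ) (hf : CwExpansiveWith f ε)
    (lam : ℝ) (hlam0 : 0 < lam) (hlam1 : lam < 1)
    (N : Set X → ℕ)
    (hN : ∀ C : Set X, IsContinuum C → ¬C.Subsingleton →
      (∃ n : ℤ, n.natAbs = N C ∧ ε < Metric.diam (zIter f n '' C)) ∧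
      (∀ n : ℤ, n.natAbs < N C → Metric.diam (zIter f n '' C) ≤ ε))
    (ρ : Set X → ℝ)
    (hρ : ∀ C : Set X, IsContinuum C →
      (¬C.Subsingleton → ρ C = lam ^ N C) ∧ (C.Subsingleton → ρ C = 0)) :
    (∀ δ > (0 : ℝ), ∃ γ > (0 : ℝ), ∀ C : Set X, IsContinuum C →
      Metric.diam C < γ → ρ C < δ) ∧
    (∀ δ > (0 : ℝ), ∃ γ > (0 : ℝ), ∀ C : Set X, IsContinuum C →
      ρ C < γ → Metric.diam C < δ) := by
  constructor
  · intro δ hδ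
    obtain ⟨m, hm⟩ := exists_pow_lt_of_lt_one hδ hlam1
    obtain ⟨γ, hγ, hγ'⟩ := stmt13_small_all f hf.1 m
    refine ⟨γ, hγ, fun C hC hCd => ?_⟩
    by_cases hss : C.Subsingleton
    · rw [(hρ C hC).2 hss]; exact hδ
    · rw [(hρ C hC).1 hss]
      obtain ⟨⟨n, hn1, hn2⟩, -⟩ := hN C hC hss
      have hmN : m ≤ N C := by
        by_contra h
        push_neg at h
        have hle := hγ' C hCd n (by omega)
        linarith
      calc lam ^ N C ≤ lam ^ m := pow_le_pow_of_le_one hlam0.le hlam1.le hmN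
        _ < δ := hm
  · intro δ hδ
    obtain ⟨n, hn⟩ := stmt13_kato f hf hδ
    refine ⟨lam ^ n, pow_pos hlam0 n, fun C hC hρC => ?_⟩
    by_cases hss : C.Subsingleton
    · rw [Metric.diam_subsingleton hss]; exact hδ
    · rw [(hρ C hC).1 hss] at hρC
      have hnN : n < N C := by
        rwa [pow_lt_pow_iff_right_of_lt_one₀ hlam0 hlam1] at hρC
      exact hn C hC fun i hi => (hN C hC hss).2 i (by omega)
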